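/- For all β, λ, y ∈ ℂ and every integer m ≥ 1, the polynomials s^(−)_m satisfy the three-step recurrence s^(−)_m(y) = (y + 2m(λ+m) + (β/2)(λ−β/2−1))·s^(−)_{m−1}(y) − (m−1)(λ+m)(λ−β/2+m−1)(β/2+m)·s^(−)_{m−2}(y), where for m = 1 the term s^(−)_{−1} is taken to be 0 (its scalar coefficient (m−1)(λ+m)(λ−β/2+m−1)(β/2+m) vanishes for m = 1). -/

import Mathlib

open Finset

/-- Ascending Pochhammer symbol `(a)_k = ∏_{i=0}^{k-1} (a+i)`. -/
noncomputable def poch (a : ℂ) (k : ℕ) : ℂ := ∏ i ∈ Finset.range k, (a + i)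

/-- `R_k(y;α) = ∏_{l=1}^{k} (y - (α-l)(α-l+1))`. -/
noncomputable def Rpoly (y α : ℂ) (k : ℕ) : ℂ :=
  ∏ l ∈ Finset.range k, (y - (α - (l + 1)) * (α - (l + 1) + 1))

/-- `R^(1)_k(y) = ∑_{j=1}^{k} (β/2-k+j+1)_{2(k-j)} (y - (β/2)(β/2+1)) R_{j-1}(y;k)`. -/
noncomputable def R1 (β y : ℂ) (k : ℕ) : ℂ :=
  ∑ j ∈ Finset.Icc 1 k,
    poch (β/2 - k + j + 1) (2*(k - j)) * (y - β/2*(β/2+1)) * Rpoly y k (j-1)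

/-- `s^(-)_m(y)`. -/
noncomputable def sminus (β lam y : ℂ) (m : ℕ) : ℂ :=
  ∑ k ∈ Finset.range (m+1),
    (m.choose k : ℂ) * poch (β/2 - lam - m) (m-k) * poch (-β/2 - m - 1) (m-k) * Rpoly y 0 k

/-- `s^(+)_m(y)`. -/
noncomputable def splus (β lam y : ℂ) (m : ℕ) : ℂ :=
  ∑ k ∈ Finset.range (m+1),
    (m.choose k : ℂ) * poch (β/2 - lam - m) (m-k) * poch (-β/2 - m + 1) (m-k) * Rpoly y 0 k

/-- Coefficients `D^(1)_k(m)`. -/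
noncomputable def D1 (β lam : ℂ) (m k : ℕ) : ℂ :=
  if k = m then lam - β + 2*m
  else (m.choose k : ℂ) * poch (lam - β/2 + k + 1) (m-k) * poch (β/2 + k + 1) (m-k-1) *
    ((k:ℂ)*(lam+β+2*m) + β/2*(lam-β-2*m))

/-- `s^(1)_m(y) = ∑_{k=0}^m D^(1)_k(m) R^(1)_k(y)`. -/
noncomputable def s1 (β lam y : ℂ) (m : ℕ) : ℂ :=
  ∑ k ∈ Finset.range (m+1), D1 β lam m k * R1 β y k

lemma poch_front (a : ℂ) (n : ℕ) : poch a (n+1) = a * poch (a+1) n := by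
  rw [poch, Finset.prod_range_succ']
  push_cast
  rw [add_zero, mul_comm]
  congr 1
  apply Finset.prod_congr rfl; intro i _; ring
lemma poch_back (a : ℂ) (n : ℕ) : poch a (n+1) = poch a n * (a + n) := by
  simp [poch, Finset.prod_range_succ]

noncomputable def cc (β lam : ℂ) (m k : ℕ) : ℂ :=
  (m.choose k : ℂ) * poch (β/2 - lam - m) (m-k) * poch (-β/2 - m - 1) (m-k)

lemma cc_oob (β lam : ℂ) {m k : ℕ} (h : m < k) : cc β lam m k = 0 := by
  simp [cc, Nat.choose_eq_zero_of_lt h]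

lemma b1 (j e : ℕ) : ((e:ℂ)+1) * ((j+e+2).choose (j+1) : ℂ)
    = ((j:ℂ)+e+2) * ((j+e+1).choose (j+1) : ℂ) := by
  have h := Nat.add_one_mul_choose_eq (j+e+1) e
  have hs : (j+e+1).choose e = (j+e+1).choose (j+1) := by
    rw [← Nat.choose_symm (by omega : j+1 ≤ j+e+1)]; congr 1; omega
  have hs2 : (j+e+2).choose (e+1) = (j+e+2).choose (j+1) := by
    rw [← Nat.choose_symm (by omega : j+1 ≤ j+e+2)]; congr 1; omega
  rw [show j+e+1+1 = j+e+2 from rfl, hs, hs2] at h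
  have hc : ((j:ℂ)+e+2) * ((j+e+1).choose (j+1) : ℂ)
      = ((j+e+2).choose (j+1) : ℂ) * ((e:ℂ)+1) := by exact_mod_cast h
  linear_combination -hc

lemma b2 (j e : ℕ) : ((e:ℂ)+2) * ((j+e+3).choose (j+1) : ℂ)
    = ((j:ℂ)+e+3) * ((j+e+2).choose (j+1) : ℂ) := by
  have h := Nat.add_one_mul_choose_eq (j+e+2) (e+1)
  have hs : (j+e+2).choose (e+1) = (j+e+2).choose (j+1) := by
    rw [← Nat.choose_symm (by omega : j+1 ≤ j+e+2)]; congr 1; omega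
  have hs2 : (j+e+3).choose (e+2) = (j+e+3).choose (j+1) := by
    rw [← Nat.choose_symm (by omega : j+1 ≤ j+e+3)]; congr 1; omega
  rw [show j+e+2+1 = j+e+3 from rfl, show e+1+1 = e+2 from rfl, hs, hs2] at h
  have hc : ((j:ℂ)+e+3) * ((j+e+2).choose (j+1) : ℂ)
      = ((j+e+3).choose (j+1) : ℂ) * ((e:ℂ)+2) := by exact_mod_cast h
  linear_combination -hc

lemma b3 (j e : ℕ) : ((e:ℂ)+2) * ((j+e+2).choose j : ℂ)
    = ((j:ℂ)+1) * ((j+e+2).choose (j+1) : ℂ) := by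
  have h := Nat.choose_succ_right_eq (j+e+2) j
  rw [show j+e+2-j = e+2 from by omega] at h
  have hc : ((j+e+2).choose (j+1) : ℂ) * ((j:ℂ)+1)
      = ((j+e+2).choose j : ℂ) * ((e:ℂ)+2) := by exact_mod_cast h
  linear_combination -hc

lemma hR (y : ℂ) (k : ℕ) :
    y * Rpoly y 0 k = Rpoly y 0 (k+1) + (((k:ℂ)+1)*k) * Rpoly y 0 k := by
  rw [Rpoly, Rpoly, Finset.prod_range_succ]
  push_cast
  ring

lemma key0 (β lam : ℂ) (n : ℕ) :
    cc β lam (n+2) 0 = (2*((n:ℂ)+2)*(lam+((n:ℂ)+2)) + β/2*(lam-β/2-1)) * cc β lam (n+1) 0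
      - ((n:ℂ)+1)*(lam+((n:ℂ)+2))*(lam-β/2+((n:ℂ)+1))*(β/2+((n:ℂ)+2)) * cc β lam n 0 := by
  set U : ℂ := β/2 - lam - (n:ℂ) with hU
  set V : ℂ := -β/2 - (n:ℂ) - 1 with hV
  have pA : poch (β/2 - lam - ((n+2:ℕ):ℂ)) (n+2) = (U-2)*((U-1)*poch U n) := by
    rw [show (β/2 - lam - ((n+2:ℕ):ℂ)) = U-2 by rw [hU]; push_cast; ring,
        poch_front, poch_front, show U-2+1 = U-1 by ring, show U-1+1 = U by ring]
  have pB : poch (β/2 - lam - ((n+1:ℕ):ℂ)) (n+1) = (U-1)*poch U n := by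
    rw [show (β/2 - lam - ((n+1:ℕ):ℂ)) = U-1 by rw [hU]; push_cast; ring,
        poch_front, show U-1+1 = U by ring]
  have qA : poch (-β/2 - ((n+2:ℕ):ℂ) - 1) (n+2) = (V-2)*((V-1)*poch V n) := by
    rw [show (-β/2 - ((n+2:ℕ):ℂ) - 1) = V-2 by rw [hV]; push_cast; ring,
        poch_front, poch_front, show V-2+1 = V-1 by ring, show V-1+1 = V by ring]
  have qB : poch (-β/2 - ((n+1:ℕ):ℂ) - 1) (n+1) = (V-1)*poch V n := by
    rw [show (-β/2 - ((n+1:ℕ):ℂ) - 1) = V-1 by rw [hV]; push_cast; ring,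
        poch_front, show V-1+1 = V by ring]
  simp only [cc, Nat.sub_zero, Nat.choose_zero_right, Nat.cast_one, one_mul]
  rw [pA, pB, qA, qB]
  ring

lemma key_n (β lam : ℂ) (n : ℕ) :
    cc β lam (n+2) (n+1) = cc β lam (n+1) n
      + (((n:ℂ)+1)*((n:ℂ)+2) + 2*((n:ℂ)+2)*(lam+((n:ℂ)+2)) + β/2*(lam-β/2-1)) * cc β lam (n+1) (n+1)
      - ((n:ℂ)+1)*(lam+((n:ℂ)+2))*(lam-β/2+((n:ℂ)+1))*(β/2+((n:ℂ)+2)) * cc β lam n (n+1) := by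
  rw [cc_oob β lam (show n < n+1 by omega)]
  simp only [cc, show n+2-(n+1) = 1 from by omega, show n+1-n = 1 from by omega,
    Nat.sub_self, Nat.choose_self, Nat.choose_succ_self_right, Nat.cast_one, one_mul]
  simp only [poch, Finset.prod_range_one, Finset.prod_range_zero, Nat.cast_zero, add_zero]
  push_cast
  ring

lemma key_top (β lam : ℂ) (n : ℕ) :
    cc β lam (n+2) (n+2) = cc β lam (n+1) (n+1)
      + (((n:ℂ)+2)*((n:ℂ)+3) + 2*((n:ℂ)+2)*(lam+((n:ℂ)+2)) + β/2*(lam-β/2-1)) * cc β lam (n+1) (n+2)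
      - ((n:ℂ)+1)*(lam+((n:ℂ)+2))*(lam-β/2+((n:ℂ)+1))*(β/2+((n:ℂ)+2)) * cc β lam n (n+2) := by
  rw [cc_oob β lam (show n+1 < n+2 by omega), cc_oob β lam (show n < n+2 by omega)]
  simp only [cc, Nat.sub_self, Nat.choose_self, Nat.cast_one, one_mul]
  simp only [poch, Finset.prod_range_zero]
  ring

lemma key (β lam : ℂ) (j e : ℕ) :
    cc β lam (j+e+3) (j+1) = cc β lam (j+e+2) j
      + (((j:ℂ)+1)*((j:ℂ)+2) + 2*((j:ℂ)+e+3)*(lam+((j:ℂ)+e+3)) + β/2*(lam-β/2-1)) * cc β lam (j+e+2) (j+1)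
      - (((j:ℂ)+e+2)*(lam+((j:ℂ)+e+3))*(lam-β/2+((j:ℂ)+e+2))*(β/2+((j:ℂ)+e+3))) * cc β lam (j+e+1) (j+1) := by
  set U : ℂ := β/2 - lam - ((j:ℂ)+(e:ℂ)+1) with hU
  set V : ℂ := -β/2 - ((j:ℂ)+(e:ℂ)+1) - 1 with hV
  have pA : poch (β/2 - lam - ((j+e+3:ℕ):ℂ)) (e+2) = (U-2)*((U-1)*poch U e) := by
    rw [show (β/2 - lam - ((j+e+3:ℕ):ℂ)) = U-2 by rw [hU]; push_cast; ring,
        poch_front, poch_front, show U-2+1 = U-1 by ring, show U-1+1 = U by ring]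
  have pB : poch (β/2 - lam - ((j+e+2:ℕ):ℂ)) (e+2) = ((U-1)*poch U e) * (U+e) := by
    rw [show (β/2 - lam - ((j+e+2:ℕ):ℂ)) = U-1 by rw [hU]; push_cast; ring,
        poch_back, poch_front, show U-1+1 = U by ring,
        show U-1+((e:ℕ)+1 : ℕ) = U+e by push_cast; ring]
  have pC : poch (β/2 - lam - ((j+e+2:ℕ):ℂ)) (e+1) = (U-1)*poch U e := by
    rw [show (β/2 - lam - ((j+e+2:ℕ):ℂ)) = U-1 by rw [hU]; push_cast; ring,
        poch_front, show U-1+1 = U by ring]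
  have pD : poch (β/2 - lam - ((j+e+1:ℕ):ℂ)) e = poch U e := by
    rw [show (β/2 - lam - ((j+e+1:ℕ):ℂ)) = U by rw [hU]; push_cast; ring]
  have qA : poch (-β/2 - ((j+e+3:ℕ):ℂ) - 1) (e+2) = (V-2)*((V-1)*poch V e) := by
    rw [show (-β/2 - ((j+e+3:ℕ):ℂ) - 1) = V-2 by rw [hV]; push_cast; ring,
        poch_front, poch_front, show V-2+1 = V-1 by ring, show V-1+1 = V by ring]
  have qB : poch (-β/2 - ((j+e+2:ℕ):ℂ) - 1) (e+2) = ((V-1)*poch V e) * (V+e) := by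
    rw [show (-β/2 - ((j+e+2:ℕ):ℂ) - 1) = V-1 by rw [hV]; push_cast; ring,
        poch_back, poch_front, show V-1+1 = V by ring,
        show V-1+((e:ℕ)+1 : ℕ) = V+e by push_cast; ring]
  have qC : poch (-β/2 - ((j+e+2:ℕ):ℂ) - 1) (e+1) = (V-1)*poch V e := by
    rw [show (-β/2 - ((j+e+2:ℕ):ℂ) - 1) = V-1 by rw [hV]; push_cast; ring,
        poch_front, show V-1+1 = V by ring]
  have qD : poch (-β/2 - ((j+e+1:ℕ):ℂ) - 1) e = poch V e := by
    rw [show (-β/2 - ((j+e+1:ℕ):ℂ) - 1) = V by rw [hV]; push_cast; ring]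
  have e1 : ((e:ℂ)+1) ≠ 0 := by
    rw [show ((e:ℂ)+1) = ((e+1 : ℕ):ℂ) by push_cast; ring]
    exact Nat.cast_ne_zero.mpr (by omega)
  have e2 : ((e:ℂ)+2) ≠ 0 := by
    rw [show ((e:ℂ)+2) = ((e+2 : ℕ):ℂ) by push_cast; ring]
    exact Nat.cast_ne_zero.mpr (by omega)
  have hC2 : ((j+e+2).choose (j+1) : ℂ)
      = ((j:ℂ)+e+2)*((j+e+1).choose (j+1) : ℂ)/((e:ℂ)+1) := by
    field_simp
    linear_combination b1 j e
  have hC1 : ((j+e+3).choose (j+1) : ℂ)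
      = ((j:ℂ)+e+2)*((j:ℂ)+e+3)*((j+e+1).choose (j+1) : ℂ)/(((e:ℂ)+1)*((e:ℂ)+2)) := by
    field_simp
    linear_combination ((e:ℂ)+1) * b2 j e + ((j:ℂ)+e+3) * b1 j e
  have hC3 : ((j+e+2).choose j : ℂ)
      = ((j:ℂ)+1)*((j:ℂ)+e+2)*((j+e+1).choose (j+1) : ℂ)/(((e:ℂ)+1)*((e:ℂ)+2)) := by
    field_simp
    linear_combination ((j:ℂ)+1) * b1 j e + ((e:ℂ)+1) * b3 j e
  simp only [cc]
  rw [show j+e+3-(j+1) = e+2 from by omega, show j+e+2-j = e+2 from by omega,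
      show j+e+2-(j+1) = e+1 from by omega, show j+e+1-(j+1) = e from by omega,
      pA, pB, pC, pD, qA, qB, qC, qD, hC1, hC2, hC3]
  field_simp
  ring

lemma step (β lam : ℂ) (n j : ℕ) (hj : j < n+2) :
    cc β lam (n+2) (j+1) = cc β lam (n+1) j
      + ((((j:ℂ)+1)+1)*((j:ℂ)+1) + (2*((n:ℂ)+2)*(lam+((n:ℂ)+2)) + β/2*(lam-β/2-1))) * cc β lam (n+1) (j+1)
      - ((n:ℂ)+1)*(lam+((n:ℂ)+2))*(lam-β/2+((n:ℂ)+1))*(β/2+((n:ℂ)+2)) * cc β lam n (j+1) := by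
  rcases (by omega : j + 1 < n + 1 ∨ j = n ∨ j = n + 1) with h | rfl | rfl
  · obtain ⟨e, rfl⟩ : ∃ e, n = j+1+e := ⟨n-(j+1), by omega⟩
    have hk := key β lam j e
    simp only [show j+1+e+2 = j+e+3 from by omega, show j+1+e+1 = j+e+2 from by omega,
      show j+1+e = j+e+1 from by omega] at hj ⊢
    push_cast at hk ⊢
    linear_combination hk
  · have hk := key_n β lam j
    push_cast at hk ⊢
    linear_combination hk
  · have hk := key_top β lam n
    push_cast at hk ⊢
    linear_combination hk

lemma sminus_eq (β lam y : ℂ) (M : ℕ) :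
    sminus β lam y M = ∑ k ∈ Finset.range (M+1), cc β lam M k * Rpoly y 0 k := rfl

lemma main2 (β lam y : ℂ) (n : ℕ) :
    sminus β lam y (n+2) =
      (y + (2*((n:ℂ)+2)*(lam+((n:ℂ)+2)) + β/2*(lam-β/2-1))) * sminus β lam y (n+1)
      - ((n:ℂ)+1)*(lam+((n:ℂ)+2))*(lam-β/2+((n:ℂ)+1))*(β/2+((n:ℂ)+2)) * sminus β lam y n := by
  set A := 2*((n:ℂ)+2)*(lam+((n:ℂ)+2)) + β/2*(lam-β/2-1) with hA
  set B := ((n:ℂ)+1)*(lam+((n:ℂ)+2))*(lam-β/2+((n:ℂ)+1))*(β/2+((n:ℂ)+2)) with hB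
  have z1 : cc β lam n (n+1) = 0 := cc_oob β lam (by omega)
  have z2 : cc β lam (n+1) (n+2) = 0 := cc_oob β lam (by omega)
  have z3 : cc β lam n (n+2) = 0 := cc_oob β lam (by omega)
  calc sminus β lam y (n+2)
      = ∑ k ∈ Finset.range (n+2), cc β lam (n+2) (k+1) * Rpoly y 0 (k+1)
          + cc β lam (n+2) 0 * Rpoly y 0 0 := by
        rw [sminus_eq, show n+2+1 = n+2+1 from rfl, Finset.sum_range_succ']
    _ = ∑ k ∈ Finset.range (n+2),
          (cc β lam (n+1) k * Rpoly y 0 (k+1)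
            + ((((k:ℂ)+1+1)*((k:ℂ)+1) + A) * cc β lam (n+1) (k+1) - B * cc β lam n (k+1))
              * Rpoly y 0 (k+1))
          + cc β lam (n+2) 0 * Rpoly y 0 0 := by
        congr 1
        refine Finset.sum_congr rfl (fun k hk => ?_)
        have hs := step β lam n k (Finset.mem_range.mp hk)
        linear_combination (Rpoly y 0 (k+1)) * hs
    _ = ∑ k ∈ Finset.range (n+2), cc β lam (n+1) k * Rpoly y 0 (k+1)
          + (∑ k ∈ Finset.range (n+2),
              ((((k:ℂ)+1+1)*((k:ℂ)+1) + A) * cc β lam (n+1) (k+1) - B * cc β lam n (k+1))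
                * Rpoly y 0 (k+1))
          + cc β lam (n+2) 0 * Rpoly y 0 0 := by
        rw [Finset.sum_add_distrib]
    _ = ∑ k ∈ Finset.range (n+2), cc β lam (n+1) k * Rpoly y 0 (k+1)
          + (∑ k ∈ Finset.range (n+1),
              ((((k:ℂ)+1+1)*((k:ℂ)+1) + A) * cc β lam (n+1) (k+1) - B * cc β lam n (k+1))
                * Rpoly y 0 (k+1))
          + cc β lam (n+2) 0 * Rpoly y 0 0 := by
        congr 2
        rw [show n+2 = n+1+1 from rfl, Finset.sum_range_succ, z2, z3]
        ring
    _ = ∑ k ∈ Finset.range (n+2), cc β lam (n+1) k * Rpoly y 0 (k+1)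
          + (∑ k ∈ Finset.range (n+1),
              ((((k:ℂ)+1+1)*((k:ℂ)+1) + A) * cc β lam (n+1) (k+1) - B * cc β lam n (k+1))
                * Rpoly y 0 (k+1))
          + (A * cc β lam (n+1) 0 - B * cc β lam n 0) * Rpoly y 0 0 := by
        congr 1
        have h0 := key0 β lam n
        linear_combination (Rpoly y 0 0) * h0
    _ = ∑ k ∈ Finset.range (n+2), cc β lam (n+1) k * Rpoly y 0 (k+1)
          + ∑ k ∈ Finset.range (n+2),
              ((((k:ℂ)+1)*(k:ℂ) + A) * cc β lam (n+1) k - B * cc β lam n k) * Rpoly y 0 k := by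
        rw [add_assoc]
        congr 1
        rw [show n+2 = n+1+1 from rfl]
        conv_rhs => rw [Finset.sum_range_succ']
        congr 1
        · refine Finset.sum_congr rfl (fun k _ => ?_)
          push_cast
          ring
        · push_cast
          ring
    _ = ∑ k ∈ Finset.range (n+2),
          ((y + A) * (cc β lam (n+1) k * Rpoly y 0 k) - B * (cc β lam n k * Rpoly y 0 k)) := by
        rw [← Finset.sum_add_distrib]
        refine Finset.sum_congr rfl (fun k _ => ?_)
        linear_combination (-(cc β lam (n+1) k)) * hR y k
    _ = (y + A) * ∑ k ∈ Finset.range (n+2), cc β lam (n+1) k * Rpoly y 0 k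
          - B * ∑ k ∈ Finset.range (n+2), cc β lam n k * Rpoly y 0 k := by
        rw [Finset.sum_sub_distrib, Finset.mul_sum, Finset.mul_sum]
    _ = (y + A) * sminus β lam y (n+1) - B * sminus β lam y n := by
        rw [sminus_eq β lam y (n+1), sminus_eq β lam y n]
        congr 2
        rw [show n+2 = n+1+1 from rfl, Finset.sum_range_succ, z1]
        ring


/-- three-step recurrence for `s^(-)_m`, m ≥ 1. For m = 1 the natural-number
index `m-2` equals 0, but its scalar coefficient `(m-1)(λ+m)(λ-β/2+m-1)(β/2+m)` vanishes. -/
theorem sminus_recurrence (β lam y : ℂ) (m : ℕ) (hm : 1 ≤ m) :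
    sminus β lam y m =
      (y + 2*(m:ℂ)*(lam + m) + β/2*(lam - β/2 - 1)) * sminus β lam y (m-1)
      - ((m:ℂ) - 1)*(lam + m)*(lam - β/2 + m - 1)*(β/2 + m) * sminus β lam y (m-2) := by
  match m, hm with
  | 1, _ =>
    norm_num [sminus, poch, Rpoly, Finset.sum_range_succ, Finset.prod_range_succ]
    ring
  | (n+2), _ =>
    rw [show n+2-1 = n+1 from rfl, show n+2-2 = n from rfl]
    have h := main2 β lam y n
    push_cast
    linear_combination h
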